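/- Let ζ = e^{2πi/6} and let H_144 be the 4×4 Hermitian matrix over ℤ[ζ] defined as: diagonal entries 6, H_{i,i+1} = 2ζ-4, H_{i+1,i} = -2ζ-2 for i = 1,2,3, zero elsewhere. Then there is no nonzero vector v ∈ ℤ[ζ]^4 with v* H_144 v < 6, i.e., the minimal nonzero value of the form is 6. -/

import Mathlib

open Complex Matrix

lemma aux_pos (a0 a1 a2 a3 b0 b1 b2 b3 : ℚ)
    (h : a0^2 + a0*b0 + b0^2 + a1^2 + a1*b1 + b1^2 + a2^2 + a2*b2 + b2^2
        + a3^2 + a3*b3 + b3^2 - (a0*a1 + b0*b1 + a0*b1)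
        - (a1*a2 + b1*b2 + a1*b2) - (a2*a3 + b2*b3 + a2*b3) ≤ 0) :
    a0 = 0 ∧ a1 = 0 ∧ a2 = 0 ∧ a3 = 0 ∧ b0 = 0 ∧ b1 = 0 ∧ b2 = 0 ∧ b3 = 0 := by
  have n0 := sq_nonneg (a0 + b0/2 - a1/2 - b1/2)
  have n1 := sq_nonneg (b0 + a1/3 - b1/3)
  have n2 := sq_nonneg (a1 + b1/2 - 3*a2/4 - 3*b2/4)
  have n3 := sq_nonneg (b1 + a2/2 - b2/2)
  have n4 := sq_nonneg (a2 + b2/2 - a3 - b3)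
  have n5 := sq_nonneg (b2 + 2*a3/3 - 2*b3/3)
  have n6 := sq_nonneg (a3 + b3/2)
  have n7 := sq_nonneg (b3)
  have e0 : (a0 + b0/2 - a1/2 - b1/2)^2 ≤ 0 := by linarith
  have z0 : (a0 + b0/2 - a1/2 - b1/2) = 0 := pow_eq_zero_iff two_ne_zero |>.mp (le_antisymm e0 n0)
  have e1 : (b0 + a1/3 - b1/3)^2 ≤ 0 := by linarith
  have z1 : (b0 + a1/3 - b1/3) = 0 := pow_eq_zero_iff two_ne_zero |>.mp (le_antisymm e1 n1)
  have e2 : (a1 + b1/2 - 3*a2/4 - 3*b2/4)^2 ≤ 0 := by linarith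
  have z2 : (a1 + b1/2 - 3*a2/4 - 3*b2/4) = 0 := pow_eq_zero_iff two_ne_zero |>.mp (le_antisymm e2 n2)
  have e3 : (b1 + a2/2 - b2/2)^2 ≤ 0 := by linarith
  have z3 : (b1 + a2/2 - b2/2) = 0 := pow_eq_zero_iff two_ne_zero |>.mp (le_antisymm e3 n3)
  have e4 : (a2 + b2/2 - a3 - b3)^2 ≤ 0 := by linarith
  have z4 : (a2 + b2/2 - a3 - b3) = 0 := pow_eq_zero_iff two_ne_zero |>.mp (le_antisymm e4 n4)
  have e5 : (b2 + 2*a3/3 - 2*b3/3)^2 ≤ 0 := by linarith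
  have z5 : (b2 + 2*a3/3 - 2*b3/3) = 0 := pow_eq_zero_iff two_ne_zero |>.mp (le_antisymm e5 n5)
  have e6 : (a3 + b3/2)^2 ≤ 0 := by linarith
  have z6 : (a3 + b3/2) = 0 := pow_eq_zero_iff two_ne_zero |>.mp (le_antisymm e6 n6)
  have e7 : (b3)^2 ≤ 0 := by linarith
  have z7 : (b3) = 0 := pow_eq_zero_iff two_ne_zero |>.mp (le_antisymm e7 n7)
  refine ⟨by linarith, by linarith, by linarith, by linarith, by linarith, by linarith, by linarith, by linarith⟩

lemma key_id (ζ : ℂ) (hsq : ζ^2 = ζ - 1) (hconj : (starRingEnd ℂ) ζ = 1 - ζ)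
    (a b : Fin 4 → ℤ) :
    (∑ i, ∑ j, (starRingEnd ℂ) ((a i : ℂ) + b i * ζ) *
      (!![6, 2*ζ - 4, 0, 0;
          -2*ζ - 2, 6, 2*ζ - 4, 0;
          0, -2*ζ - 2, 6, 2*ζ - 4;
          0, 0, -2*ζ - 2, 6] i j) * ((a j : ℂ) + b j * ζ))
    = ((6 * ((a 0)^2 + (a 0)*(b 0) + (b 0)^2 + (a 1)^2 + (a 1)*(b 1) + (b 1)^2
        + (a 2)^2 + (a 2)*(b 2) + (b 2)^2 + (a 3)^2 + (a 3)*(b 3) + (b 3)^2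
        - ((a 0)*(a 1) + (b 0)*(b 1) + (a 0)*(b 1))
        - ((a 1)*(a 2) + (b 1)*(b 2) + (a 1)*(b 2))
        - ((a 2)*(a 3) + (b 2)*(b 3) + (a 2)*(b 3))) : ℤ) : ℂ) := by
  simp only [Fin.sum_univ_four, Matrix.of_apply, Matrix.cons_val', Matrix.cons_val_zero,
    Matrix.cons_val_one, Matrix.head_cons, Matrix.empty_val', Matrix.cons_val_fin_one,
    Matrix.head_fin_const, Matrix.cons_val_two, Matrix.tail_cons, Matrix.cons_val_three,
    map_add, _root_.map_mul, map_intCast, hconj]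
  push_cast
  linear_combination (-6*(b 3:ℂ)^2 + 6*(b 2:ℂ)*(b 3:ℂ) - 6*(b 2:ℂ)^2 + 6*(b 1:ℂ)*(b 2:ℂ)
    - 6*(b 1:ℂ)^2 + 6*(b 0:ℂ)*(b 1:ℂ) - 6*(b 0:ℂ)^2 - 4*(a 3:ℂ)*(b 2:ℂ) + 4*(a 2:ℂ)*(b 3:ℂ)
    - 4*(a 2:ℂ)*(b 1:ℂ) + 4*(a 1:ℂ)*(b 2:ℂ) - 4*(a 1:ℂ)*(b 0:ℂ) + 4*(a 0:ℂ)*(b 1:ℂ)) * hsq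

/-- With `ζ = e^{2πi/6}` and `H₁₄₄` as above, there is no nonzero vector
`v ∈ ℤ[ζ]^4` with `v* H v < 6`; the minimal nonzero value of the form is 6. -/
theorem stmt_12 (ζ : ℂ) (hζ : ζ = Complex.exp (2 * Real.pi * Complex.I / 6))
    (H : Matrix (Fin 4) (Fin 4) ℂ)
    (hH : H = !![6, 2*ζ - 4, 0, 0;
                 -2*ζ - 2, 6, 2*ζ - 4, 0;
                 0, -2*ζ - 2, 6, 2*ζ - 4;
                 0, 0, -2*ζ - 2, 6]) :
    (∀ v : Fin 4 → ℂ, (∀ i, ∃ a b : ℤ, v i = a + b * ζ) → v ≠ 0 →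
      ¬ (∑ i, ∑ j, (starRingEnd ℂ) (v i) * H i j * v j).re < 6) ∧
    (∃ v : Fin 4 → ℂ, (∀ i, ∃ a b : ℤ, v i = a + b * ζ) ∧ v ≠ 0 ∧
      (∑ i, ∑ j, (starRingEnd ℂ) (v i) * H i j * v j) = 6) := by
  have hζ2 : ζ = (1 + Real.sqrt 3 * Complex.I) / 2 := by
    have h1 : (2 * (Real.pi:ℂ) * Complex.I / 6 : ℂ) = ((Real.pi/3 : ℝ) : ℂ) * Complex.I := by
      push_cast; ring
    rw [hζ, h1, Complex.exp_mul_I, ← Complex.ofReal_cos, ← Complex.ofReal_sin,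
      Real.cos_pi_div_three, Real.sin_pi_div_three]
    push_cast; ring
  have hx : ((Real.sqrt 3 : ℝ) : ℂ)^2 = 3 := by
    norm_cast
    rw [Real.sq_sqrt]; norm_num
  have hsq : ζ^2 = ζ - 1 := by
    rw [hζ2]
    linear_combination (((Real.sqrt 3 : ℝ) : ℂ)^2/4) * Complex.I_sq - (1/4) * hx
  have hconj : (starRingEnd ℂ) ζ = 1 - ζ := by
    rw [hζ2]
    simp [Complex.conj_I, Complex.conj_ofReal, map_ofNat]
    ring
  subst hH
  constructor
  · intro v hv hne hlt
    choose a b hab using hv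
    have hS := key_id ζ hsq hconj a b
    simp only [← hab] at hS
    rw [hS] at hlt
    rw [Complex.intCast_re] at hlt
    have h6 : (6 * ((a 0)^2 + (a 0)*(b 0) + (b 0)^2 + (a 1)^2 + (a 1)*(b 1) + (b 1)^2
        + (a 2)^2 + (a 2)*(b 2) + (b 2)^2 + (a 3)^2 + (a 3)*(b 3) + (b 3)^2
        - ((a 0)*(a 1) + (b 0)*(b 1) + (a 0)*(b 1))
        - ((a 1)*(a 2) + (b 1)*(b 2) + (a 1)*(b 2))
        - ((a 2)*(a 3) + (b 2)*(b 3) + (a 2)*(b 3)))) < 6 := by exact_mod_cast hlt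
    have hM : ((a 0)^2 + (a 0)*(b 0) + (b 0)^2 + (a 1)^2 + (a 1)*(b 1) + (b 1)^2
        + (a 2)^2 + (a 2)*(b 2) + (b 2)^2 + (a 3)^2 + (a 3)*(b 3) + (b 3)^2
        - ((a 0)*(a 1) + (b 0)*(b 1) + (a 0)*(b 1))
        - ((a 1)*(a 2) + (b 1)*(b 2) + (a 1)*(b 2))
        - ((a 2)*(a 3) + (b 2)*(b 3) + (a 2)*(b 3))) ≤ 0 := by linarith
    have hQ : ((a 0 : ℚ))^2 + (a 0 : ℚ)*(b 0 : ℚ) + (b 0 : ℚ)^2 + (a 1 : ℚ)^2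
        + (a 1 : ℚ)*(b 1 : ℚ) + (b 1 : ℚ)^2 + (a 2 : ℚ)^2 + (a 2 : ℚ)*(b 2 : ℚ)
        + (b 2 : ℚ)^2 + (a 3 : ℚ)^2 + (a 3 : ℚ)*(b 3 : ℚ) + (b 3 : ℚ)^2
        - ((a 0 : ℚ)*(a 1 : ℚ) + (b 0 : ℚ)*(b 1 : ℚ) + (a 0 : ℚ)*(b 1 : ℚ))
        - ((a 1 : ℚ)*(a 2 : ℚ) + (b 1 : ℚ)*(b 2 : ℚ) + (a 1 : ℚ)*(b 2 : ℚ))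
        - ((a 2 : ℚ)*(a 3 : ℚ) + (b 2 : ℚ)*(b 3 : ℚ) + (a 2 : ℚ)*(b 3 : ℚ)) ≤ 0 := by
      exact_mod_cast hM
    obtain ⟨ha0, ha1, ha2, ha3, hb0, hb1, hb2, hb3⟩ :=
      aux_pos (a 0) (a 1) (a 2) (a 3) (b 0) (b 1) (b 2) (b 3) hQ
    have ha0' : a 0 = 0 := by exact_mod_cast ha0
    have ha1' : a 1 = 0 := by exact_mod_cast ha1
    have ha2' : a 2 = 0 := by exact_mod_cast ha2
    have ha3' : a 3 = 0 := by exact_mod_cast ha3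
    have hb0' : b 0 = 0 := by exact_mod_cast hb0
    have hb1' : b 1 = 0 := by exact_mod_cast hb1
    have hb2' : b 2 = 0 := by exact_mod_cast hb2
    have hb3' : b 3 = 0 := by exact_mod_cast hb3
    apply hne
    funext i
    fin_cases i <;>
      simp [hab, ha0', ha1', ha2', ha3', hb0', hb1', hb2', hb3']
  · refine ⟨fun i => ((![1,0,0,0] : Fin 4 → ℤ) i : ℂ) + ((0 : Fin 4 → ℤ) i : ℂ) * ζ, ?_, ?_, ?_⟩
    · intro i
      exact ⟨![1,0,0,0] i, 0, rfl⟩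
    · intro hc
      have := congrFun hc 0
      simp at this
    · rw [key_id ζ hsq hconj ![1,0,0,0] 0]
      have h2 : (![1,0,0,0] : Fin 4 → ℤ) 2 = 0 := rfl
      have h3 : (![1,0,0,0] : Fin 4 → ℤ) 3 = 0 := rfl
      norm_num [h2, h3]
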